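/- Let D ⊂ R^d be compact and Y a centered Gaussian process on D with continuous covariance function k. Let (x_{ni})_{1≤i≤n, n∈N} be a triangular array of points of D such that for each x ∈ D, min_{i≤n} ||x_{ni} - x|| → 0 as n → ∞. For each n, let M_1,...,M_{p_n} be Kriging (conditional-expectation) predictors based on subvectors X_1,...,X_{p_n} of X = (x_{n1},...,x_{nn}) whose union covers all components of X, and let M_{A_n}(x) be their optimal linear aggregation. Then sup_{x ∈ D} E[(Y(x) - M_{A_n}(x))^2] → 0 as n → ∞. -/

import Mathlib

open MeasureTheory ProbabilityTheory Filter

lemma my_mul_integrable {Ω : Type*} [MeasurableSpace Ω] {μ : Measure Ω}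
    {f g : Ω → ℝ} (hf : MemLp f 2 μ) (hg : MemLp g 2 μ) :
    Integrable (fun ω => f ω * g ω) μ := by
  have h : MemLp (f • g) 1 μ :=
    hg.smul hf
  have heq : (f • g) = fun ω => f ω * g ω := rfl
  rw [heq] at h
  exact memLp_one_iff_integrable.mp h

lemma my_memℒp_condexp_two {Ω : Type*} {m : MeasurableSpace Ω} {m0 : MeasurableSpace Ω}
    {μ : Measure Ω} [IsProbabilityMeasure μ]
    (hm : m ≤ m0) {f : Ω → ℝ} (hf : MemLp f 2 μ) : MemLp (μ[f|m]) 2 μ := by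
  haveI : SigmaFinite (μ.trim hm) := inferInstance
  set gL : Lp ℝ 2 μ := (condExpL2 ℝ ℝ hm (hf.toLp f) : Lp ℝ 2 μ) with hgLdef
  have h1 : (gL : Ω → ℝ) =ᵐ[μ] μ[f|m] := by
    refine ae_eq_condExp_of_forall_setIntegral_eq hm
      (memLp_one_iff_integrable.mp (hf.mono_exponent (by norm_num)))
      (fun s hs hμs => ?_) (fun s hs hμs => ?_) ?_
    · exact (memLp_one_iff_integrable.mp
        ((Lp.memLp gL).mono_exponent (by norm_num))).integrableOn
    · exact (integral_condExpL2_eq hm (hf.toLp f) hs hμs.ne).trans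
        (setIntegral_congr_ae (hm s hs) ((hf.coeFn_toLp).mono fun x hx _ => hx))
    · exact aestronglyMeasurable_condExpL2 hm _
  exact (Lp.memLp gL).ae_eq h1

lemma my_condexp_min {Ω : Type*} {m : MeasurableSpace Ω} {m0 : MeasurableSpace Ω}
    {μ : Measure Ω} [IsProbabilityMeasure μ]
    (hm : m ≤ m0) {f g : Ω → ℝ} (hf : MemLp f 2 μ) (hg : MemLp g 2 μ)
    (hgm : StronglyMeasurable[m] g) :
    ∫ ω, (f ω - (μ[f|m]) ω) ^ 2 ∂μ ≤ ∫ ω, (f ω - g ω) ^ 2 ∂μ := by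
  haveI : SigmaFinite (μ.trim hm) := inferInstance
  set e : Ω → ℝ := μ[f|m] with he_def
  have he : MemLp e 2 μ := my_memℒp_condexp_two hm hf
  have hh : MemLp (fun ω => e ω - g ω) 2 μ := he.sub hg
  have hfe : MemLp (fun ω => f ω - e ω) 2 μ := hf.sub he
  have hhm : StronglyMeasurable[m] (fun ω => e ω - g ω) :=
    stronglyMeasurable_condExp.sub hgm
  have hint : Integrable (fun ω => (e ω - g ω) * f ω) μ := my_mul_integrable hh hf
  have h1 : ∫ ω, (e ω - g ω) * f ω ∂μ = ∫ ω, (e ω - g ω) * e ω ∂μ := by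
    have hmul : μ[(fun ω => e ω - g ω) * f|m] =ᵐ[μ] (fun ω => e ω - g ω) * μ[f|m] :=
      condExp_mul_of_stronglyMeasurable_left hhm hint
        (memLp_one_iff_integrable.mp (hf.mono_exponent (by norm_num)))
    calc ∫ ω, (e ω - g ω) * f ω ∂μ
        = ∫ ω, (μ[(fun ω => e ω - g ω) * f|m]) ω ∂μ :=
          (integral_condExp hm (f := (fun ω => e ω - g ω) * f)).symm
      _ = ∫ ω, (e ω - g ω) * e ω ∂μ := integral_congr_ae (hmul.mono fun ω hω => by
          simpa [he_def] using hω)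
  have hcross : ∫ ω, (f ω - e ω) * (e ω - g ω) ∂μ = 0 := by
    have hrw : (fun ω => (f ω - e ω) * (e ω - g ω)) =
        fun ω => (e ω - g ω) * f ω - (e ω - g ω) * e ω := funext fun ω => by ring
    rw [hrw, integral_sub hint (my_mul_integrable hh he), h1, sub_self]
  have hexp : (fun ω => (f ω - g ω) ^ 2) = fun ω =>
      (f ω - e ω) ^ 2 + (2 * ((f ω - e ω) * (e ω - g ω)) + (e ω - g ω) ^ 2) :=
    funext fun ω => by ring
  have hI1 : Integrable (fun ω => (f ω - e ω) ^ 2) μ := hfe.integrable_sq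
  have hI2 : Integrable (fun ω => (f ω - e ω) * (e ω - g ω)) μ := my_mul_integrable hfe hh
  have hI2' : Integrable (fun ω => 2 * ((f ω - e ω) * (e ω - g ω))) μ := hI2.const_mul 2
  have hI3 : Integrable (fun ω => (e ω - g ω) ^ 2) μ := hh.integrable_sq
  have hI23 : Integrable (fun ω => 2 * ((f ω - e ω) * (e ω - g ω)) + (e ω - g ω) ^ 2) μ :=
    hI2'.add hI3
  calc ∫ ω, (f ω - e ω) ^ 2 ∂μ
      ≤ ∫ ω, (f ω - e ω) ^ 2 ∂μ + ∫ ω, (e ω - g ω) ^ 2 ∂μ :=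
        le_add_of_nonneg_right (integral_nonneg fun ω => sq_nonneg _)
    _ = ∫ ω, (f ω - g ω) ^ 2 ∂μ := by
        rw [hexp, integral_add hI1 hI23, integral_add hI2' hI3, integral_const_mul, hcross]
        ring
/-- Consistency of nested Kriging: for a centered Gaussian process `Y` on a compact
`D ⊆ ℝ^d` with continuous covariance `k`, a dense triangular array of observation points,
Kriging (conditional expectation) sub-models based on subvectors covering all observation
points, and the optimal linear aggregation `M_{A_n}`, one has
`sup_{x ∈ D} E[(Y(x) - M_{A_n}(x))²] → 0`. -/
theorem stmt_8 {d : ℕ} {Ω : Type*} [MeasurableSpace Ω]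
    (μ : Measure Ω) [IsProbabilityMeasure μ]
    (D : Set (EuclideanSpace ℝ (Fin d))) (hDc : IsCompact D) (hDne : D.Nonempty)
    (Y : D → Ω → ℝ) (hYmeas : ∀ x, Measurable (Y x)) (hYL2 : ∀ x, MemLp (Y x) 2 μ)
    (hYc : ∀ x, ∫ ω, Y x ω ∂μ = 0)
    (k : D → D → ℝ) (hkcont : Continuous fun q : D × D => k q.1 q.2)
    (hk : ∀ x x', ∫ ω, Y x ω * Y x' ω ∂μ = k x x')
    -- Y is a Gaussian process with covariance k
    (hGauss : ∀ (m : ℕ) (pts : Fin m → D) (c : Fin m → ℝ),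
      Measure.map (fun ω => ∑ i, c i * Y (pts i) ω) μ =
        gaussianReal 0 (∑ i, ∑ j, c i * c j * k (pts i) (pts j)).toNNReal)
    -- dense triangular array of observation points
    (x : (n : ℕ) → Fin (n + 1) → D)
    (hdense : ∀ q : D, Tendsto
      (fun n => ⨅ i : Fin (n + 1),
        dist (x n i : EuclideanSpace ℝ (Fin d)) (q : EuclideanSpace ℝ (Fin d)))
      atTop (nhds 0))
    -- the sub-designs, covering all observation points
    (p : ℕ → ℕ) (hp : ∀ n, 0 < p n)
    (S : (n : ℕ) → Fin (p n) → Finset (Fin (n + 1)))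
    (hcover : ∀ n (i : Fin (n + 1)), ∃ j, i ∈ S n j)
    -- the Kriging sub-models: conditional expectations given the sub-design observations
    (M : (n : ℕ) → Fin (p n) → D → Ω → ℝ)
    (hM : ∀ n j q, M n j q =ᵐ[μ]
      μ[Y q | MeasurableSpace.comap (fun ω (i : S n j) => Y (x n i) ω) inferInstance])
    -- the aggregated predictor: optimal linear combination of the sub-models
    (MA : (n : ℕ) → D → Ω → ℝ)
    (hMA_lin : ∀ n q, ∃ c : Fin (p n) → ℝ, ∀ ω, MA n q ω = ∑ j, c j * M n j q ω)
    (hMA_opt : ∀ n q (c : Fin (p n) → ℝ),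
      ∫ ω, (Y q ω - MA n q ω) ^ 2 ∂μ ≤ ∫ ω, (Y q ω - ∑ j, c j * M n j q ω) ^ 2 ∂μ) :
    Tendsto (fun n => ⨆ q : D, ∫ ω, (Y q ω - MA n q ω) ^ 2 ∂μ) atTop (nhds 0) := by
  classical

  -- L² distance between process values
  have hE : ∀ q r : D, ∫ ω, (Y q ω - Y r ω) ^ 2 ∂μ = k q q - 2 * k q r + k r r := by
    intro q r
    have hrw : (fun ω => (Y q ω - Y r ω) ^ 2) = fun ω =>
        Y q ω * Y q ω - 2 * (Y q ω * Y r ω) + Y r ω * Y r ω := funext fun ω => by ring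
    have h1 : Integrable (fun ω => Y q ω * Y q ω) μ := my_mul_integrable (hYL2 q) (hYL2 q)
    have h2 : Integrable (fun ω => Y q ω * Y r ω) μ := my_mul_integrable (hYL2 q) (hYL2 r)
    have h2' : Integrable (fun ω => 2 * (Y q ω * Y r ω)) μ := h2.const_mul 2
    have h3 : Integrable (fun ω => Y r ω * Y r ω) μ := my_mul_integrable (hYL2 r) (hYL2 r)
    have h12 : Integrable (fun ω => Y q ω * Y q ω - 2 * (Y q ω * Y r ω)) μ := h1.sub h2'
    rw [hrw, integral_add h12 h3, integral_sub h1 h2', integral_const_mul,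
      hk q q, hk q r, hk r r]
  haveI : Nonempty D := hDne.to_subtype
  haveI : CompactSpace D := isCompact_iff_compactSpace.mp hDc
  set F : D × D → ℝ := fun pr => k pr.1 pr.1 - 2 * k pr.1 pr.2 + k pr.2 pr.2 with hFdef
  have hFc : Continuous F := by
    have h11 : Continuous fun pr : D × D => k pr.1 pr.1 :=
      hkcont.comp (continuous_fst.prodMk continuous_fst)
    have h22 : Continuous fun pr : D × D => k pr.2 pr.2 :=
      hkcont.comp (continuous_snd.prodMk continuous_snd)
    exact (h11.sub (continuous_const.mul hkcont)).add h22
  have hFu : UniformContinuous F := CompactSpace.uniformContinuous_of_continuous hFc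
  rw [Metric.tendsto_atTop]
  intro ε hε
  obtain ⟨δ, hδpos, hδ⟩ := Metric.uniformContinuous_iff.mp hFu (ε / 2) (by linarith)
  have hsmall : ∀ q r : D, dist (r : EuclideanSpace ℝ (Fin d)) (q : EuclideanSpace ℝ (Fin d)) < δ →
      ∫ ω, (Y q ω - Y r ω) ^ 2 ∂μ < ε / 2 := by
    intro q r hdist
    have hd : dist ((q, r) : D × D) ((q, q) : D × D) < δ := by
      rw [Prod.dist_eq]
      simp only [dist_self]
      rw [max_eq_right dist_nonneg, Subtype.dist_eq]
      exact hdist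
    have habs := hδ hd
    have h0 : F (q, q) = 0 := by simp only [hFdef]; ring
    rw [Real.dist_eq, h0, sub_zero] at habs
    calc ∫ ω, (Y q ω - Y r ω) ^ 2 ∂μ = F (q, r) := hE q r
      _ ≤ |F (q, r)| := le_abs_self _
      _ < ε / 2 := habs
  -- finite subcover
  have hcov : D ⊆ ⋃ q : D, Metric.ball (q : EuclideanSpace ℝ (Fin d)) (δ / 2) := fun z hz =>
    Set.mem_iUnion.mpr ⟨⟨z, hz⟩, Metric.mem_ball_self (by linarith)⟩
  obtain ⟨t, ht⟩ := hDc.elim_finite_subcover (fun q : D => Metric.ball (q : EuclideanSpace ℝ (Fin d)) (δ / 2))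
    (fun q => Metric.isOpen_ball) hcov
  have hev : ∀ᶠ n in atTop, ∀ q0 ∈ t,
      (⨅ i : Fin (n + 1), dist (x n i : EuclideanSpace ℝ (Fin d)) (q0 : EuclideanSpace ℝ (Fin d))) < δ / 2 := by
    rw [eventually_all_finset]
    exact fun q0 _ => (hdense q0).eventually_lt_const (by linarith)
  obtain ⟨N, hN⟩ := eventually_atTop.mp hev
  refine ⟨N, fun n hn => ?_⟩
  have hb : ∀ q : D, ∫ ω, (Y q ω - MA n q ω) ^ 2 ∂μ ≤ ε / 2 := by
    intro q
    obtain ⟨q0, hq0t, hq0⟩ := Set.mem_iUnion₂.mp (ht q.2)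
    obtain ⟨i, hi⟩ := exists_lt_of_ciInf_lt (hN n hn q0 hq0t)
    have hnear : dist (x n i : EuclideanSpace ℝ (Fin d)) (q : EuclideanSpace ℝ (Fin d)) < δ := by
      calc dist (x n i : EuclideanSpace ℝ (Fin d)) (q : EuclideanSpace ℝ (Fin d))
          ≤ dist (x n i : EuclideanSpace ℝ (Fin d)) (q0 : EuclideanSpace ℝ (Fin d)) + dist (q0 : EuclideanSpace ℝ (Fin d)) (q : EuclideanSpace ℝ (Fin d)) := dist_triangle _ _ _
        _ < δ / 2 + δ / 2 := add_lt_add hi (by rw [dist_comm]; exact Metric.mem_ball.mp hq0)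
        _ = δ := by ring
    obtain ⟨j, hij⟩ := hcover n i
    have hφ : Measurable (fun ω (i' : S n j) => Y (x n i') ω) :=
      measurable_pi_lambda _ fun i' => hYmeas _
    have hgm : StronglyMeasurable[MeasurableSpace.comap
        (fun ω (i' : S n j) => Y (x n i') ω) inferInstance] (Y (x n i)) :=
      ((measurable_pi_apply (⟨i, hij⟩ : S n j)).comp
        (comap_measurable (fun ω (i' : S n j) => Y (x n i') ω))).stronglyMeasurable
    have step1 : ∫ ω, (Y q ω - MA n q ω) ^ 2 ∂μ ≤ ∫ ω, (Y q ω - M n j q ω) ^ 2 ∂μ := by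
      have h := hMA_opt n q (fun j' => if j' = j then (1 : ℝ) else 0)
      simpa using h
    have step2 : ∫ ω, (Y q ω - M n j q ω) ^ 2 ∂μ =
        ∫ ω, (Y q ω - (μ[Y q | MeasurableSpace.comap
          (fun ω (i' : S n j) => Y (x n i') ω) inferInstance]) ω) ^ 2 ∂μ :=
      integral_congr_ae ((hM n j q).mono fun ω hω => by dsimp only; rw [hω])
    have step3 := my_condexp_min (m := MeasurableSpace.comap
        (fun ω (i' : S n j) => Y (x n i') ω) inferInstance)
      hφ.comap_le (hYL2 q) (hYL2 (x n i)) hgm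
    have step4 := hsmall q (x n i) hnear
    calc ∫ ω, (Y q ω - MA n q ω) ^ 2 ∂μ
        ≤ ∫ ω, (Y q ω - M n j q ω) ^ 2 ∂μ := step1
      _ = _ := step2
      _ ≤ ∫ ω, (Y q ω - Y (x n i) ω) ^ 2 ∂μ := step3
      _ ≤ ε / 2 := le_of_lt step4
  have hnonneg : ∀ q : D, 0 ≤ ∫ ω, (Y q ω - MA n q ω) ^ 2 ∂μ := fun q =>
    integral_nonneg fun ω => sq_nonneg _
  have hbdd : BddAbove (Set.range fun q : D => ∫ ω, (Y q ω - MA n q ω) ^ 2 ∂μ) :=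
    ⟨ε / 2, by rintro _ ⟨q, rfl⟩; exact hb q⟩
  have hsup_le : (⨆ q : D, ∫ ω, (Y q ω - MA n q ω) ^ 2 ∂μ) ≤ ε / 2 := ciSup_le hb
  have hsup_ge : 0 ≤ ⨆ q : D, ∫ ω, (Y q ω - MA n q ω) ^ 2 ∂μ :=
    le_ciSup_of_le hbdd (Classical.arbitrary D) (hnonneg _)
  rw [Real.dist_eq, sub_zero, abs_of_nonneg hsup_ge]
  linarith
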